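/- Let H = M Xᵀ X M where M = diag(m_1,…,m_d), m_i i.i.d. Bernoulli(p), and X has entries in [0, r]. If p ≤ λ₀ / (2 λ_1(XᵀX)) and 2√(2dn³r⁴) + √(2 log(1/δ) d n² r⁴) ≤ λ₀/2 for some λ₀ > 0 and 0 < δ < 1, then with probability at least 1 − δ the largest eigenvalue λ_1(H) ≤ λ₀, and hence every learning rate η < 2n/λ₀ makes gradient descent on L(w) = (1/2n)||y − XMw||² converge from any initialization. -/

import Mathlib

open Matrix Filter Topology MeasureTheory ProbabilityTheory

/-- The four Penrose conditions characterizing the Moore–Penrose pseudo-inverse. -/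
def IsMoorePenrose {n d : ℕ} (A : Matrix (Fin n) (Fin d) ℝ) (B : Matrix (Fin d) (Fin n) ℝ) : Prop :=
  A * B * A = A ∧ B * A * B = B ∧ (A * B)ᵀ = A * B ∧ (B * A)ᵀ = B * A

/-- Gradient descent iterates for L(w) = (1/2n)‖y - X M w‖², where
∇L(w) = (1/n)(M Xᵀ X M w - M Xᵀ y). -/
noncomputable def gd {n d : ℕ} (X : Matrix (Fin n) (Fin d) ℝ) (M : Matrix (Fin d) (Fin d) ℝ)
    (y : Fin n → ℝ) (η : ℝ) (w0 : Fin d → ℝ) : ℕ → (Fin d → ℝ)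
  | 0 => w0
  | t + 1 => gd X M y η w0 t -
      η • ((n : ℝ)⁻¹ • ((M * Xᵀ * X * M).mulVec (gd X M y η w0 t) - (M * Xᵀ).mulVec y))

/-- The `i`-th largest eigenvalue of a Hermitian real matrix. -/
noncomputable def ithLargest {d : ℕ} {A : Matrix (Fin d) (Fin d) ℝ} (hA : A.IsHermitian)
    (i : Fin d) : ℝ :=
  (hA.eigenvalues ∘ Tuple.sort hA.eigenvalues) i.rev

lemma diag_herm {n d : ℕ} (X : Matrix (Fin n) (Fin d) ℝ) (v : Fin d → ℝ) :
    (Matrix.diagonal v * Xᵀ * X * Matrix.diagonal v).IsHermitian := by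
  have h : Matrix.diagonal v * Xᵀ * X * Matrix.diagonal v
      = (X * Matrix.diagonal v)ᵀ * (X * Matrix.diagonal v) := by
    rw [Matrix.transpose_mul, Matrix.diagonal_transpose, Matrix.mul_assoc, Matrix.mul_assoc]
  rw [h]
  simpa using Matrix.isHermitian_conjTranspose_mul_self (X * Matrix.diagonal v)

lemma hermXtX {n d : ℕ} (X : Matrix (Fin n) (Fin d) ℝ) : (Xᵀ * X).IsHermitian := by
  simpa using Matrix.isHermitian_conjTranspose_mul_self X

/-- The spectral norm (largest singular value) of a square real matrix. -/
noncomputable def specNorm {n : ℕ} (A : Matrix (Fin n) (Fin n) ℝ) : ℝ :=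
  ‖(Matrix.toEuclideanCLM (𝕜 := ℝ) A)‖

lemma herm_left {n d : ℕ} (X : Matrix (Fin n) (Fin d) ℝ) (v : Fin d → ℝ) :
    (X * Matrix.diagonal v * Xᵀ).IsHermitian := by
  have h2 : (X * Matrix.diagonal v * Xᵀ)ᵀ = X * Matrix.diagonal v * Xᵀ := by
    rw [Matrix.transpose_mul, Matrix.transpose_mul, Matrix.transpose_transpose,
      Matrix.diagonal_transpose, Matrix.mul_assoc]
  rw [Matrix.IsHermitian]
  simpa using h2

section AuxiliaryLemmas
open Matrix Real MeasureTheory ProbabilityTheory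
variable {Ω : Type} [MeasurableSpace Ω] (μ : Measure Ω) [IsProbabilityMeasure μ]

lemma dot_as_inner {d : ℕ} (v w : Fin d → ℝ) :
    v ⬝ᵥ w = @inner ℝ (EuclideanSpace ℝ (Fin d)) _ (WithLp.toLp 2 v) (WithLp.toLp 2 w) := by
  simp [dotProduct, PiLp.inner_apply, RCLike.inner_apply, mul_comm]


lemma symm_dot {d : ℕ} {B : Matrix (Fin d) (Fin d) ℝ} (hB : B.IsHermitian) (u v : Fin d → ℝ) :
    u ⬝ᵥ B.mulVec v = (B.mulVec u) ⬝ᵥ v := by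
  have hBt : Bᵀ = B := by
    have := hB; rwa [IsHermitian, conjTranspose_eq_transpose_of_trivial] at this
  rw [dotProduct_mulVec, ← mulVec_transpose, hBt]


lemma eig_smul {d : ℕ} {B : Matrix (Fin d) (Fin d) ℝ} (hB : B.IsHermitian) (i : Fin d) :
    B.mulVec (hB.eigenvectorBasis i) = hB.eigenvalues i • (hB.eigenvectorBasis i : Fin d → ℝ) :=
  hB.mulVec_eigenvectorBasis i


lemma inner_eig {d : ℕ} {B : Matrix (Fin d) (Fin d) ℝ} (hB : B.IsHermitian) (i : Fin d) (v : Fin d → ℝ) :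
    @inner ℝ (EuclideanSpace ℝ (Fin d)) _ (hB.eigenvectorBasis i)
      (WithLp.toLp 2 (B.mulVec v)) =
      hB.eigenvalues i * @inner ℝ (EuclideanSpace ℝ (Fin d)) _ (hB.eigenvectorBasis i) (WithLp.toLp 2 v) := by
  rw [← WithLp.toLp_ofLp (x := hB.eigenvectorBasis i)]
  rw [← dot_as_inner, ← dot_as_inner, symm_dot hB, eig_smul hB i, smul_dotProduct]; rfl


lemma basis_dot_self {d : ℕ} {B : Matrix (Fin d) (Fin d) ℝ} (hB : B.IsHermitian) (i : Fin d) :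
    (hB.eigenvectorBasis i : Fin d → ℝ) ⬝ᵥ (hB.eigenvectorBasis i : Fin d → ℝ) = 1 := by
  rw [dot_as_inner]
  have h2 : @inner ℝ (EuclideanSpace ℝ (Fin d)) _ (hB.eigenvectorBasis i) (hB.eigenvectorBasis i) = 1 := by
    rw [real_inner_self_eq_norm_sq, hB.eigenvectorBasis.orthonormal.1 i]; norm_num
  exact h2


lemma rayleigh_le {d : ℕ} {B : Matrix (Fin d) (Fin d) ℝ} (hB : B.IsHermitian) {c : ℝ}
    (hc : ∀ i, hB.eigenvalues i ≤ c) (v : Fin d → ℝ) :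
    v ⬝ᵥ B.mulVec v ≤ c * (v ⬝ᵥ v) := by
  classical
  have hsum := hB.eigenvectorBasis.sum_inner_mul_inner (WithLp.toLp 2 v)
    (WithLp.toLp 2 (B.mulVec v))
  rw [dot_as_inner, ← hsum]
  have hsum2 := hB.eigenvectorBasis.sum_inner_mul_inner (WithLp.toLp 2 v)
    (WithLp.toLp 2 v)
  rw [dot_as_inner v v, ← hsum2, Finset.mul_sum]
  apply Finset.sum_le_sum
  intro i _
  rw [inner_eig hB i v]
  have h1 : @inner ℝ (EuclideanSpace ℝ (Fin d)) _ (WithLp.toLp 2 v) (hB.eigenvectorBasis i) = @inner ℝ (EuclideanSpace ℝ (Fin d)) _ (hB.eigenvectorBasis i) (WithLp.toLp 2 v) := real_inner_comm _ _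
  rw [h1]
  set z := @inner ℝ (EuclideanSpace ℝ (Fin d)) _ (hB.eigenvectorBasis i) (WithLp.toLp 2 v)
  calc z * (hB.eigenvalues i * z) = hB.eigenvalues i * z ^ 2 := by ring
  _ ≤ c * z ^ 2 := mul_le_mul_of_nonneg_right (hc i) (sq_nonneg z)
  _ = c * (z * z) := by ring


lemma eig_le_of_rayleigh {n d : ℕ} (A : Matrix (Fin n) (Fin d) ℝ) {c : ℝ} (hc0 : 0 ≤ c)
    {B : Matrix (Fin d) (Fin d) ℝ} (hB : B.IsHermitian) (hBA : B = Aᵀ * A)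
    (h : ∀ w : Fin n → ℝ, w ⬝ᵥ (A * Aᵀ).mulVec w ≤ c * (w ⬝ᵥ w)) (i : Fin d) :
    hB.eigenvalues i ≤ c := by
  classical
  subst hBA
  set u : Fin d → ℝ := (hB.eigenvectorBasis i : Fin d → ℝ) with hu
  have heig : (Aᵀ * A).mulVec u = hB.eigenvalues i • u := hB.mulVec_eigenvectorBasis i
  set lam := hB.eigenvalues i with hlam
  have hww : (A *ᵥ u) ⬝ᵥ (A *ᵥ u) = lam := by
    rw [dotProduct_mulVec, ← mulVec_transpose, mulVec_mulVec, heig, smul_dotProduct,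
      basis_dot_self hB i, smul_eq_mul, mul_one]
  have hAAt : (A * Aᵀ) *ᵥ (A *ᵥ u) = lam • (A *ᵥ u) := by
    rw [mulVec_mulVec, Matrix.mul_assoc, ← mulVec_mulVec, heig, mulVec_smul]
  have hray := h (A *ᵥ u)
  rw [hAAt, dotProduct_smul, hww, smul_eq_mul] at hray
  rcases le_or_gt lam 0 with h0 | h0
  · exact h0.trans hc0
  · nlinarith


lemma psd_tm {n d : ℕ} (X : Matrix (Fin n) (Fin d) ℝ) : (Xᵀ * X).PosSemidef := by
  have := posSemidef_conjTranspose_mul_self X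
  rwa [conjTranspose_eq_transpose_of_trivial] at this


lemma lamd_nonneg {n d : ℕ} (X : Matrix (Fin n) (Fin d) ℝ) :
    0 ≤ ⨆ i, (hermXtX X).eigenvalues i := by
  rcases isEmpty_or_nonempty (Fin d) with h | h
  · rw [Real.iSup_of_isEmpty]
  · obtain ⟨i⟩ := h
    exact le_trans ((psd_tm X).eigenvalues_nonneg i)
      (le_ciSup (Set.Finite.bddAbove (Set.finite_range _)) i)


lemma eig_le_lamd {n d : ℕ} (X : Matrix (Fin n) (Fin d) ℝ) (i : Fin d) :
    (hermXtX X).eigenvalues i ≤ ⨆ i, (hermXtX X).eigenvalues i :=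
  le_ciSup (Set.Finite.bddAbove (Set.finite_range _)) i


lemma decomp {n d : ℕ} (X : Matrix (Fin n) (Fin d) ℝ) (v : Fin d → ℝ) (p : ℝ) :
    X * Matrix.diagonal v * Xᵀ =
      p • (X * Xᵀ) + Matrix.of (fun i k => ∑ j, (v j - p) * (X i j * X k j)) := by
  ext i k
  simp only [Matrix.add_apply, Matrix.smul_apply, Matrix.mul_apply, Matrix.of_apply,
    Matrix.transpose_apply, smul_eq_mul, Finset.mul_sum, Matrix.diagonal_apply,
    Finset.sum_mul, mul_ite, ite_mul, zero_mul, mul_zero, Finset.sum_ite_eq,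
    Finset.mem_univ, if_true]
  rw [← Finset.sum_add_distrib]
  apply Finset.sum_congr rfl
  intro j _
  rw [Finset.sum_ite_eq' Finset.univ j]
  simp
  ring


lemma fact_left {n d : ℕ} (X : Matrix (Fin n) (Fin d) ℝ) (v : Fin d → ℝ) (hv : ∀ j, v j = 0 ∨ v j = 1) :
    (X * Matrix.diagonal v) * (X * Matrix.diagonal v)ᵀ = X * Matrix.diagonal v * Xᵀ := by
  rw [Matrix.transpose_mul, Matrix.diagonal_transpose, Matrix.mul_assoc,
    ← Matrix.mul_assoc (Matrix.diagonal v), Matrix.diagonal_mul_diagonal]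
  have : (fun j => v j * v j) = v := by
    funext j; rcases hv j with h | h <;> rw [h] <;> ring
  rw [this, Matrix.mul_assoc]


lemma diag_herm' {n d : ℕ} (X : Matrix (Fin n) (Fin d) ℝ) (v : Fin d → ℝ) :
    (Matrix.diagonal v * Xᵀ * X * Matrix.diagonal v).IsHermitian := by
  have h : Matrix.diagonal v * Xᵀ * X * Matrix.diagonal v
      = (X * Matrix.diagonal v)ᵀ * (X * Matrix.diagonal v) := by
    rw [Matrix.transpose_mul, Matrix.diagonal_transpose, Matrix.mul_assoc, Matrix.mul_assoc]
  rw [h]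
  simpa using Matrix.isHermitian_conjTranspose_mul_self (X * Matrix.diagonal v)


lemma fact_H {n d : ℕ} (X : Matrix (Fin n) (Fin d) ℝ) (v : Fin d → ℝ) :
    Matrix.diagonal v * Xᵀ * X * Matrix.diagonal v
      = (X * Matrix.diagonal v)ᵀ * (X * Matrix.diagonal v) := by
  rw [Matrix.transpose_mul, Matrix.diagonal_transpose, Matrix.mul_assoc, Matrix.mul_assoc]


lemma Zm_rayleigh {n : ℕ} (M : Matrix (Fin n) (Fin n) ℝ) {s : ℝ} (hs : 0 ≤ s)
    (hM : ∀ i k, |M i k| ≤ s) (w : Fin n → ℝ) :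
    w ⬝ᵥ M.mulVec w ≤ s * n * (w ⬝ᵥ w) := by
  classical
  have h1 : w ⬝ᵥ M.mulVec w ≤ ∑ i, ∑ k, |w i| * s * |w k| := by
    rw [dotProduct]
    apply Finset.sum_le_sum
    intro i _
    calc w i * (M.mulVec w) i ≤ |w i * (M.mulVec w) i| := le_abs_self _
    _ = |w i| * |(M.mulVec w) i| := abs_mul _ _
    _ ≤ |w i| * ∑ k, s * |w k| := by
        apply mul_le_mul_of_nonneg_left _ (abs_nonneg _)
        calc |(M.mulVec w) i| = |∑ k, M i k * w k| := by rw [mulVec, dotProduct]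
        _ ≤ ∑ k, |M i k * w k| := Finset.abs_sum_le_sum_abs _ _
        _ ≤ ∑ k, s * |w k| := by
            apply Finset.sum_le_sum
            intro k _
            rw [abs_mul]
            exact mul_le_mul_of_nonneg_right (hM i k) (abs_nonneg _)
    _ = ∑ k, |w i| * s * |w k| := by rw [Finset.mul_sum]; apply Finset.sum_congr rfl; intros; ring
  have h2 : ∑ i, ∑ k, |w i| * s * |w k| = s * ((∑ i, |w i|) * (∑ k, |w k|)) := by
    rw [Finset.sum_mul, Finset.mul_sum]
    apply Finset.sum_congr rfl; intro i _
    rw [Finset.mul_sum, Finset.mul_sum]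
    apply Finset.sum_congr rfl; intros; ring
  have h3 : (∑ i, |w i|) * (∑ k, |w k|) ≤ n * (w ⬝ᵥ w) := by
    have := sq_sum_le_card_mul_sum_sq (s := (Finset.univ : Finset (Fin n))) (f := fun i => |w i|)
    simp only [Finset.card_univ, Fintype.card_fin] at this
    calc (∑ i, |w i|) * (∑ k, |w k|) = (∑ i, |w i|) ^ 2 := by ring
    _ ≤ n * ∑ i, |w i| ^ 2 := this
    _ = n * (w ⬝ᵥ w) := by
        rw [dotProduct]
        congr 1
        apply Finset.sum_congr rfl; intros; rw [sq_abs]; ring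
  calc w ⬝ᵥ M.mulVec w ≤ ∑ i, ∑ k, |w i| * s * |w k| := h1
  _ = s * ((∑ i, |w i|) * (∑ k, |w k|)) := h2
  _ ≤ s * (n * (w ⬝ᵥ w)) := mul_le_mul_of_nonneg_left h3 hs
  _ = s * n * (w ⬝ᵥ w) := by ring


lemma eigH_le_lam0 {n d : ℕ} (X : Matrix (Fin n) (Fin d) ℝ) (v : Fin d → ℝ)
    (hv : ∀ j, v j = 0 ∨ v j = 1) {p s lam0 : ℝ} (hp0 : 0 ≤ p) (hs0 : 0 ≤ s)
    (hZ : ∀ i k : Fin n, |∑ j, (v j - p) * (X i j * X k j)| ≤ s)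
    (hpl : p * (⨆ i, (hermXtX X).eigenvalues i) ≤ lam0 / 2)
    (hsn : s * n ≤ lam0 / 2) (hlam00 : 0 ≤ lam0) :
    ∀ i, (diag_herm' X v).eigenvalues i ≤ lam0 := by
  classical
  set L := ⨆ i, (hermXtX X).eigenvalues i with hLdef
  have hL0 : 0 ≤ L := lamd_nonneg X
  have hR1 : ∀ u : Fin d → ℝ, u ⬝ᵥ (Xᵀ * X).mulVec u ≤ L * (u ⬝ᵥ u) :=
    rayleigh_le (hermXtX X) (eig_le_lamd X)
  have hXXt : (X * Xᵀ).IsHermitian := by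
    have := hermXtX Xᵀ; rwa [transpose_transpose] at this
  have hE2 : ∀ j, hXXt.eigenvalues j ≤ L := by
    apply eig_le_of_rayleigh Xᵀ hL0 hXXt (by rw [transpose_transpose])
    intro u
    rw [show Xᵀ * Xᵀᵀ = Xᵀ * X by rw [transpose_transpose]]
    exact hR1 u
  have hR2 : ∀ w : Fin n → ℝ, w ⬝ᵥ (X * Xᵀ).mulVec w ≤ L * (w ⬝ᵥ w) := rayleigh_le hXXt hE2
  apply eig_le_of_rayleigh (X * Matrix.diagonal v) hlam00 (diag_herm' X v) (fact_H X v)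
  intro w
  rw [fact_left X v hv, decomp X v p, add_mulVec, dotProduct_add, smul_mulVec,
    dotProduct_smul, smul_eq_mul]
  have hw0 : 0 ≤ w ⬝ᵥ w := by
    rw [dotProduct]; apply Finset.sum_nonneg; intros; exact mul_self_nonneg _
  have t1 : p * (w ⬝ᵥ (X * Xᵀ).mulVec w) ≤ p * (L * (w ⬝ᵥ w)) :=
    mul_le_mul_of_nonneg_left (hR2 w) hp0
  have t2 : w ⬝ᵥ (Matrix.of fun i k => ∑ j, (v j - p) * (X i j * X k j)).mulVec w
      ≤ s * n * (w ⬝ᵥ w) := Zm_rayleigh _ hs0 (by intro i k; exact hZ i k) w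
  have hfin : p * (L * (w ⬝ᵥ w)) + s * n * (w ⬝ᵥ w) ≤ lam0 * (w ⬝ᵥ w) := by
    have : p * L + s * n ≤ lam0 := by linarith
    nlinarith
  linarith


lemma psd_tm' {n d : ℕ} (X : Matrix (Fin n) (Fin d) ℝ) : (Xᵀ * X).PosSemidef := by
  have := posSemidef_conjTranspose_mul_self X
  rwa [conjTranspose_eq_transpose_of_trivial] at this


lemma gd_converges {n d : ℕ} (X : Matrix (Fin n) (Fin d) ℝ) (v : Fin d → ℝ)
    (y : Fin n → ℝ) {η lam0 : ℝ} (hlam0 : 0 < lam0)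
    (hl : ∀ i, (diag_herm' X v).eigenvalues i ≤ lam0)
    (hη0 : 0 < η) (hη : η < 2 * n / lam0) (w0 : Fin d → ℝ) :
    ∃ l : Fin d → ℝ, Tendsto (gd X (Matrix.diagonal v) y η w0) atTop (nhds l) := by
  classical
  have hn : 0 < (n : ℝ) := by
    by_contra h
    push_neg at h
    have hn0 : (n : ℝ) = 0 := le_antisymm h (Nat.cast_nonneg n)
    rw [hn0] at hη
    simp at hη
    linarith
  set H := Matrix.diagonal v * Xᵀ * X * Matrix.diagonal v with hHdef
  have hH := diag_herm' X v
  set b := (Matrix.diagonal v * Xᵀ).mulVec y with hbdef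
  set c := η * (n : ℝ)⁻¹ with hcdef
  have hc0 : 0 < c := by positivity
  set g := gd X (Matrix.diagonal v) y η w0 with hgdef
  have hgrec : ∀ t, g (t + 1) = g t - η • ((n : ℝ)⁻¹ • (H.mulVec (g t) - b)) := fun t => rfl
  set u : Fin d → Fin d → ℝ := fun i => (hH.eigenvectorBasis i : Fin d → ℝ) with hudef
  set lam : Fin d → ℝ := hH.eigenvalues with hlamdef
  have heig : ∀ i, H.mulVec (u i) = lam i • u i := fun i => hH.mulVec_eigenvectorBasis i
  set a : ℕ → Fin d → ℝ := fun t i => u i ⬝ᵥ g t with hadef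
  set β : Fin d → ℝ := fun i => u i ⬝ᵥ b with hbetadef
  have harec : ∀ t i, a (t + 1) i = a t i - c * (lam i * a t i - β i) := by
    intro t i
    show u i ⬝ᵥ g (t+1) = _
    rw [hgrec t, dotProduct_sub, dotProduct_smul, dotProduct_smul, dotProduct_sub]
    have : u i ⬝ᵥ H.mulVec (g t) = lam i * (u i ⬝ᵥ g t) := by
      rw [symm_dot hH, heig i, smul_dotProduct]; rfl
    rw [this]
    show u i ⬝ᵥ g t - η * ((n:ℝ)⁻¹ * (lam i * (u i ⬝ᵥ g t) - β i)) = _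
    rw [hcdef]; ring
  -- positivity of eigenvalues
  have hP : H.PosSemidef := by
    rw [hHdef, fact_H X v]
    exact psd_tm' (X * Matrix.diagonal v)
  have hlampos : ∀ i, 0 ≤ lam i := fun i => hP.eigenvalues_nonneg i
  -- beta vanishes on kernel
  have hbeta0 : ∀ i, lam i = 0 → β i = 0 := by
    intro i h0
    have hzero : (X * Matrix.diagonal v).mulVec (u i) = 0 := by
      have h1 : ((X * Matrix.diagonal v).mulVec (u i)) ⬝ᵥ ((X * Matrix.diagonal v).mulVec (u i)) = 0 := by
        rw [dotProduct_mulVec, ← mulVec_transpose, mulVec_mulVec, ← fact_H X v, ← hHdef,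
          heig i, h0, zero_smul, zero_dotProduct]
      exact dotProduct_self_eq_zero.mp h1
    rw [hbetadef]
    show u i ⬝ᵥ b = 0
    rw [hbdef, dotProduct_mulVec, ← mulVec_transpose, transpose_mul, diagonal_transpose,
      transpose_transpose, hzero, zero_dotProduct]
  -- closed forms
  set alim : Fin d → ℝ := fun i => if lam i = 0 then a 0 i else β i / lam i with halimdef
  have hconv : ∀ i, Tendsto (fun t => a t i) atTop (nhds (alim i)) := by
    intro i
    by_cases h0 : lam i = 0
    · have hconst : ∀ t, a t i = a 0 i := by
        intro t
        induction t with
        | zero => rfl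
        | succ t ih => rw [harec t i, h0, hbeta0 i h0, ih]; ring
      simp only [halimdef, if_pos h0]
      have : (fun t => a t i) = fun _ => a 0 i := funext hconst
      rw [this]
      exact tendsto_const_nhds
    · have hlpos : 0 < lam i := lt_of_le_of_ne (hlampos i) (Ne.symm h0)
      set q := 1 - c * lam i with hqdef
      have hclosed : ∀ t, a t i = q ^ t * (a 0 i - β i / lam i) + β i / lam i := by
        intro t
        induction t with
        | zero => simp
        | succ t ih =>
          rw [harec t i, ih, hqdef]
          field_simp
          ring
      have hq1 : |q| < 1 := by
        rw [abs_lt, hqdef]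
        constructor
        · -- need c * lam i < 2
          have h1 : c * lam i ≤ c * lam0 := mul_le_mul_of_nonneg_left (hl i) hc0.le
          have h2 : c * lam0 < 2 := by
            have h3 : η * lam0 < 2 * n := (lt_div_iff₀ hlam0).mp hη
            have h4 : η * lam0 * (↑n)⁻¹ < 2 * ↑n * (↑n)⁻¹ :=
              mul_lt_mul_of_pos_right h3 (by positivity)
            have h5 : (2:ℝ) * ↑n * (↑n)⁻¹ = 2 := by field_simp
            calc c * lam0 = η * lam0 * (↑n)⁻¹ := by rw [hcdef]; ring
            _ < 2 * ↑n * (↑n)⁻¹ := h4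
            _ = 2 := h5
          linarith
        · have : 0 < c * lam i := mul_pos hc0 hlpos
          linarith
      have hq0 : Tendsto (fun t : ℕ => q ^ t) atTop (nhds 0) :=
        tendsto_pow_atTop_nhds_zero_of_abs_lt_one hq1
      have := (hq0.mul_const (a 0 i - β i / lam i)).add_const (β i / lam i)
      rw [zero_mul, zero_add] at this
      simp only [halimdef, if_neg h0]
      have heq : (fun t => a t i) = fun t => q ^ t * (a 0 i - β i / lam i) + β i / lam i :=
        funext hclosed
      rw [heq]
      exact this
  -- reconstruction
  have hrecon : ∀ x : Fin d → ℝ, ∀ j, x j = ∑ i, (u i ⬝ᵥ x) * u i j := by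
    intro x j
    have hsum := hH.eigenvectorBasis.sum_repr' (WithLp.toLp 2 x)
    have hc := congrArg (fun z => (EuclideanSpace.proj (𝕜 := ℝ) j) z) hsum
    simp only [map_sum, _root_.map_smul, PiLp.proj_apply, smul_eq_mul] at hc
    rw [← hc]
    apply Finset.sum_congr rfl
    intro i _
    congr 1
    exact (dot_as_inner (u i) x).symm
  refine ⟨fun j => ∑ i, alim i * u i j, ?_⟩
  rw [tendsto_pi_nhds]
  intro j
  have : (fun t => g t j) = fun t => ∑ i, a t i * u i j := by
    funext t; exact hrecon (g t) j
  rw [this]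
  exact tendsto_finset_sum _ fun i _ => (hconv i).mul_const (u i j)


lemma exp_quad_neg {u : ℝ} (hu : u ≤ 0) : Real.exp u ≤ 1 + u + u^2/2 := by
  have key : ∀ x : ℝ, x ≤ 0 → 0 ≤ 1 + x + x^2/2 - Real.exp x := by
    intro x hx
    set h : ℝ → ℝ := fun z => 1 + z + z^2/2 - Real.exp z with hh
    have hd : ∀ z : ℝ, HasDerivAt h (1 + z - Real.exp z) z := by
      intro z
      have h' := (((hasDerivAt_const z (1:ℝ)).add (hasDerivAt_id z)).add
          ((hasDerivAt_pow 2 z).div_const 2)).sub (Real.hasDerivAt_exp z)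
      exact h'.congr_deriv (by norm_num)
    have hanti : AntitoneOn h (Set.Iic 0) := by
      apply antitoneOn_of_deriv_nonpos (convex_Iic 0)
      · exact Continuous.continuousOn (by continuity)
      · intro z hz
        exact (hd z).differentiableAt.differentiableWithinAt
      · intro z hz
        rw [(hd z).deriv]
        have : z + 1 ≤ Real.exp z := Real.add_one_le_exp z
        linarith
    have := hanti (Set.mem_Iic.mpr hx) (Set.mem_Iic.mpr le_rfl) hx
    have h0 : h 0 = 0 := by simp [hh]
    rw [h0] at this
    simpa [hh] using this
  have := key u hu
  linarith


lemma bern_mgf_half {p u : ℝ} (hp0 : 0 ≤ p) (hp1 : p ≤ 1) (hu : u ≤ 0) :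
    p * Real.exp ((1-p)*u) + (1-p) * Real.exp (-(p*u)) ≤ Real.exp (u^2/2) := by
  have e1 : p * Real.exp ((1-p)*u) + (1-p) * Real.exp (-(p*u))
      = Real.exp (-(p*u)) * (1 + p * (Real.exp u - 1)) := by
    rw [show (1-p)*u = u + -(p*u) by ring, Real.exp_add]
    ring
  rw [e1]
  have h2 : 1 + p * (Real.exp u - 1) ≤ Real.exp (p * (Real.exp u - 1)) := by
    have := Real.add_one_le_exp (p * (Real.exp u - 1))
    linarith
  calc Real.exp (-(p*u)) * (1 + p * (Real.exp u - 1))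
      ≤ Real.exp (-(p*u)) * Real.exp (p * (Real.exp u - 1)) :=
        mul_le_mul_of_nonneg_left h2 (Real.exp_nonneg _)
  _ = Real.exp (p * (Real.exp u - 1 - u)) := by rw [← Real.exp_add]; ring_nf
  _ ≤ Real.exp (u^2/2) := by
      apply Real.exp_le_exp.mpr
      have hq : Real.exp u - 1 - u ≤ u^2/2 := by
        have := exp_quad_neg hu
        linarith
      have hnn : 0 ≤ Real.exp u - 1 - u := by
        have := Real.add_one_le_exp u
        linarith
      nlinarith


lemma bern_mgf {p u : ℝ} (hp0 : 0 ≤ p) (hp1 : p ≤ 1) :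
    p * Real.exp ((1-p)*u) + (1-p) * Real.exp (-(p*u)) ≤ Real.exp (u^2/2) := by
  rcases le_or_gt u 0 with h | h
  · exact bern_mgf_half hp0 hp1 h
  · have := bern_mgf_half (p := 1-p) (u := -u) (by linarith) (by linarith) (by linarith)
    have e : (1-(1-p)) * -u = -(p * u) := by ring
    have e2 : -((1-p) * -u) = (1-p)*u := by ring
    rw [e, e2] at this
    have e3 : (-u)^2/2 = u^2/2 := by ring
    rw [e3] at this
    linarith



lemma two_valued_repr {mi : Ω → ℝ} (h01 : ∀ ω, mi ω = 0 ∨ mi ω = 1)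
    (f : ℝ → ℝ) :
    (fun ω => f (mi ω)) = fun ω =>
      Set.indicator (mi ⁻¹' {1}) (fun _ => f 1) ω
        + Set.indicator (mi ⁻¹' {1})ᶜ (fun _ => f 0) ω := by
  funext ω
  rcases h01 ω with h | h
  · have hmem : ω ∉ mi ⁻¹' {1} := by simp [Set.mem_preimage, h]
    rw [Set.indicator_of_notMem hmem, Set.indicator_of_mem (by simpa using hmem), h]
    ring
  · have hmem : ω ∈ mi ⁻¹' {1} := by simp [Set.mem_preimage, h]
    rw [Set.indicator_of_mem hmem, Set.indicator_of_notMem (by simpa using hmem), h]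
    ring


lemma bern_integral {p : ℝ} (hp0 : 0 ≤ p) (hp1 : p ≤ 1) {mi : Ω → ℝ}
    (h01 : ∀ ω, mi ω = 0 ∨ mi ω = 1) (hmeas : Measurable mi)
    (hber : μ {ω | mi ω = 1} = ENNReal.ofReal p) (f : ℝ → ℝ) :
    Integrable (fun ω => f (mi ω)) μ ∧
    ∫ ω, f (mi ω) ∂μ = p * f 1 + (1-p) * f 0 := by
  have hA : MeasurableSet (mi ⁻¹' {1}) := hmeas (measurableSet_singleton 1)
  have hAm : μ (mi ⁻¹' {1}) = ENNReal.ofReal p := by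
    rw [show mi ⁻¹' {1} = {ω | mi ω = 1} from rfl]
    exact hber
  have hAc : μ (mi ⁻¹' {1})ᶜ = ENNReal.ofReal (1-p) := by
    rw [measure_compl hA (measure_ne_top μ _), hAm, measure_univ]
    rw [show (1 : ENNReal) = ENNReal.ofReal (1-p) + ENNReal.ofReal p by
      rw [← ENNReal.ofReal_add (by linarith) hp0]; norm_num]
    simp
  rw [two_valued_repr h01 f]
  constructor
  · exact ((integrable_const (f 1)).indicator hA).add
      ((integrable_const (f 0)).indicator hA.compl)
  · rw [integral_add ((integrable_const (f 1)).indicator hA)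
      ((integrable_const (f 0)).indicator hA.compl),
      integral_indicator_const _ hA, integral_indicator_const _ hA.compl, measureReal_def, measureReal_def, hAm, hAc,
      ENNReal.toReal_ofReal hp0, ENNReal.toReal_ofReal (by linarith)]
    simp only [smul_eq_mul]
    try ring


lemma Yj_mgf {p : ℝ} (hp0 : 0 ≤ p) (hp1 : p ≤ 1) {mi : Ω → ℝ}
    (h01 : ∀ ω, mi ω = 0 ∨ mi ω = 1) (hmeas : Measurable mi)
    (hber : μ {ω | mi ω = 1} = ENNReal.ofReal p) (c : ℝ) (t : ℝ) :
    Integrable (fun ω => Real.exp (t * ((mi ω - p) * c))) μ ∧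
      mgf (fun ω => (mi ω - p) * c) μ t ≤ Real.exp (t^2 * c^2 / 2) := by
  have h := bern_integral μ hp0 hp1 h01 hmeas hber (fun x => Real.exp (t * ((x - p) * c)))
  refine ⟨h.1, ?_⟩
  have hmgf : mgf (fun ω => (mi ω - p) * c) μ t = ∫ ω, Real.exp (t * ((mi ω - p) * c)) ∂μ := rfl
  rw [hmgf, h.2]
  have key := bern_mgf (u := t * c) hp0 hp1
  calc p * Real.exp (t * ((1 - p) * c)) + (1 - p) * Real.exp (t * ((0 - p) * c))
      = p * Real.exp ((1-p)*(t*c)) + (1-p) * Real.exp (-(p*(t*c))) := by ring_nf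
  _ ≤ Real.exp ((t*c)^2/2) := key
  _ = Real.exp (t^2 * c^2/2) := by ring_nf


lemma chernoff_sum {d : ℕ} {p R : ℝ} (hp0 : 0 ≤ p) (hp1 : p ≤ 1) (hR0 : 0 ≤ R)
    (m : Fin d → Ω → ℝ) (h01 : ∀ j ω, m j ω = 0 ∨ m j ω = 1)
    (hmeas : ∀ j, Measurable (m j))
    (hber : ∀ j, μ {ω | m j ω = 1} = ENNReal.ofReal p)
    (hindep : ProbabilityTheory.iIndepFun m μ)
    (c : Fin d → ℝ) (hc : ∀ j, (c j)^2 ≤ R) {s t : ℝ} (ht : 0 ≤ t) :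
    (μ {ω | s ≤ ∑ j, (m j ω - p) * c j}).toReal ≤ Real.exp (-t*s + t^2 * d * R / 2) ∧
    (μ {ω | ∑ j, (m j ω - p) * c j ≤ -s}).toReal ≤ Real.exp (-t*s + t^2 * d * R / 2) := by
  classical
  set Y : Fin d → Ω → ℝ := fun j ω => (m j ω - p) * c j with hY
  have hYmeas : ∀ j, Measurable (Y j) := fun j => ((hmeas j).sub_const p).mul_const (c j)
  have hYindep : ProbabilityTheory.iIndepFun Y μ := by
    have := hindep.comp (fun j (x : ℝ) => (x - p) * c j)
      (fun j => (measurable_id.sub_const p).mul_const (c j))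
    exact this
  have hint : ∀ (u : ℝ) (j : Fin d), Integrable (fun ω => Real.exp (u * Y j ω)) μ :=
    fun u j => (Yj_mgf μ hp0 hp1 (h01 j) (hmeas j) (hber j) (c j) u).1
  have hmgfB : ∀ u : ℝ, mgf (∑ j, Y j) μ u ≤ Real.exp (u^2 * d * R / 2) := by
    intro u
    rw [hYindep.mgf_sum hYmeas]
    calc ∏ j, mgf (Y j) μ u ≤ ∏ j : Fin d, Real.exp (u^2 * R / 2) := by
          apply Finset.prod_le_prod (fun j _ => mgf_nonneg)
          intro j _
          refine le_trans (Yj_mgf μ hp0 hp1 (h01 j) (hmeas j) (hber j) (c j) u).2 ?_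
          apply Real.exp_le_exp.mpr
          have := hc j
          nlinarith [sq_nonneg u]
    _ = Real.exp (u^2 * d * R / 2) := by
          rw [Finset.prod_const, ← Real.exp_nat_mul]
          congr 1
          simp [Finset.card_univ]
          ring
  have hintsum : ∀ u : ℝ, Integrable (fun ω => Real.exp (u * (∑ j, Y j) ω)) μ :=
    fun u => iIndepFun.integrable_exp_mul_sum hYindep hYmeas (fun j _ => hint u j)
  have hsetrep : ∀ ω, (∑ j, Y j) ω = ∑ j, (m j ω - p) * c j := by
    intro ω; rw [Finset.sum_apply]
  constructor
  · have h1 := measure_ge_le_exp_mul_mgf (X := ∑ j, Y j) (μ := μ) s ht (hintsum t)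
    have hset : {ω | s ≤ ∑ j, (m j ω - p) * c j} = {ω | s ≤ (∑ j, Y j) ω} := by
      ext ω; simp [hsetrep ω, hY]
    rw [hset]
    refine h1.trans ?_
    rw [Real.exp_add]
    exact mul_le_mul_of_nonneg_left (hmgfB t) (Real.exp_nonneg _)
  · have h1 := measure_le_le_exp_mul_mgf (X := ∑ j, Y j) (μ := μ) (-s) (neg_nonpos.mpr ht)
      (hintsum (-t))
    have hset : {ω | ∑ j, (m j ω - p) * c j ≤ -s} = {ω | (∑ j, Y j) ω ≤ -s} := by
      ext ω; simp [hsetrep ω, hY]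
    rw [hset]
    refine h1.trans ?_
    have e : -(-t) * (-s) = -t * s := by ring
    rw [e, Real.exp_add]
    refine mul_le_mul_of_nonneg_left ?_ (Real.exp_nonneg _)
    refine (hmgfB (-t)).trans ?_
    apply Real.exp_le_exp.mpr
    nlinarith [sq_nonneg t]


lemma two_nsq_le_exp (n : ℕ) : 2 * (n:ℝ)^2 ≤ Real.exp (4*n) := by
  have h1 : 2*(n:ℝ) + 1 ≤ Real.exp (2*n) := Real.add_one_le_exp (2*n)
  have h2 : (2*(n:ℝ)+1)^2 ≤ (Real.exp (2*n))^2 := by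
    rw [sq, sq]; exact mul_self_le_mul_self (by positivity) h1
  have h3 : (Real.exp (2*(n:ℝ)))^2 = Real.exp (4*n) := by
    rw [sq, ← Real.exp_add]; ring_nf
  nlinarith [sq_nonneg ((n:ℝ) - 1), (Nat.cast_nonneg n : (0:ℝ) ≤ n)]


lemma numeric_bound {n d : ℕ} {r δ lam0 : ℝ} (hn : 0 < n) (hd : 0 < d) (hr : 0 < r)
    (hδ0 : 0 < δ) (hδ1 : δ < 1) (hlam0 : 0 < lam0)
    (hbound : 2 * Real.sqrt (2 * d * n ^ 3 * r ^ 4) +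
      Real.sqrt (2 * Real.log (1 / δ) * d * n ^ 2 * r ^ 4) ≤ lam0 / 2) :
    2 * (n:ℝ)^2 * Real.exp (-((lam0/(2*n))^2 / (2 * (d * r^4)))) ≤ δ := by
  set L := Real.log (1/δ) with hLdef
  have hL0 : 0 ≤ L := Real.log_nonneg (by rw [le_div_iff₀ hδ0]; linarith)
  have hnR : (0:ℝ) < n := by exact_mod_cast hn
  have hdR : (0:ℝ) < d := by exact_mod_cast hd
  set A := 2 * (d:ℝ) * n * r^4 with hAdef
  set B := 2 * L * (d:ℝ) * r^4 with hBdef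
  have hA0 : 0 ≤ A := by positivity
  have hB0 : 0 ≤ B := by positivity
  have e1 : Real.sqrt (2 * d * n ^ 3 * r ^ 4) = n * Real.sqrt A := by
    rw [show (2 * (d:ℝ) * (n:ℝ) ^ 3 * r ^ 4) = (n:ℝ)^2 * A by rw [hAdef]; ring,
      Real.sqrt_mul (sq_nonneg _), Real.sqrt_sq hnR.le]
  have e2 : Real.sqrt (2 * L * d * n ^ 2 * r ^ 4) = n * Real.sqrt B := by
    rw [show (2 * L * (d:ℝ) * (n:ℝ) ^ 2 * r ^ 4) = (n:ℝ)^2 * B by rw [hBdef]; ring,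
      Real.sqrt_mul (sq_nonneg _), Real.sqrt_sq hnR.le]
  rw [e1, e2] at hbound
  set s := lam0 / (2*n) with hsdef
  have hs : 2 * Real.sqrt A + Real.sqrt B ≤ s := by
    rw [hsdef, le_div_iff₀ (by positivity)]
    nlinarith
  have hsq : 4 * A + B ≤ s^2 := by
    have h1 : (2 * Real.sqrt A + Real.sqrt B)^2 ≤ s^2 := by
      exact pow_le_pow_left₀ (by positivity) hs 2
    have h2 : (2 * Real.sqrt A + Real.sqrt B)^2
        = 4 * A + B + 4 * (Real.sqrt A * Real.sqrt B) := by
      rw [add_sq]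
      rw [mul_pow, Real.sq_sqrt hA0, Real.sq_sqrt hB0]
      ring
    nlinarith [Real.sqrt_nonneg A, Real.sqrt_nonneg B]
  have hexp : s^2 / (2 * (d * r^4)) ≥ 4*n + L := by
    rw [ge_iff_le, le_div_iff₀ (by positivity)]
    calc (4*(n:ℝ) + L) * (2 * (d * r^4)) = 4 * A + B := by rw [hAdef, hBdef]; ring
    _ ≤ s^2 := hsq
  have hmono : Real.exp (-(s^2/(2*(d*r^4)))) ≤ Real.exp (-(4*n+L)) := by
    apply Real.exp_le_exp.mpr; linarith
  have hdelta : Real.exp (-L) = δ := by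
    have hL' : L = -Real.log δ := by rw [hLdef, one_div, Real.log_inv]
    rw [hL', neg_neg, Real.exp_log hδ0]
  have h2n := two_nsq_le_exp n
  calc 2 * (n:ℝ)^2 * Real.exp (-(s^2/(2*(d*r^4))))
      ≤ 2 * (n:ℝ)^2 * Real.exp (-(4*n+L)) := by
        apply mul_le_mul_of_nonneg_left hmono (by positivity)
  _ = (2 * (n:ℝ)^2 * Real.exp (-(4*n))) * Real.exp (-L) := by
        rw [show -(4*(n:ℝ)+L) = -(4*n) + -L by ring, Real.exp_add]; ring
  _ ≤ 1 * Real.exp (-L) := by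
        apply mul_le_mul_of_nonneg_right _ (Real.exp_nonneg _)
        rw [Real.exp_neg]
        rw [mul_inv_le_iff₀ (Real.exp_pos _)]
        simpa using h2n
  _ = δ := by rw [one_mul, hdelta]


lemma prob_G {n d : ℕ} {p r δ lam0 : ℝ} (hp0 : 0 ≤ p) (hp1 : p ≤ 1)
    (hδ0 : 0 < δ) (hδ1 : δ < 1) (hlam0 : 0 < lam0)
    (hn : 0 < n) (hd : 0 < d) (hr : 0 < r)
    (X : Matrix (Fin n) (Fin d) ℝ) (hX : ∀ i j, X i j ∈ Set.Icc (0:ℝ) r)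
    (m : Fin d → Ω → ℝ) (h01 : ∀ j ω, m j ω = 0 ∨ m j ω = 1)
    (hmeas : ∀ j, Measurable (m j))
    (hber : ∀ j, μ {ω | m j ω = 1} = ENNReal.ofReal p)
    (hindep : ProbabilityTheory.iIndepFun m μ)
    (hbound : 2 * Real.sqrt (2 * d * n ^ 3 * r ^ 4) +
      Real.sqrt (2 * Real.log (1 / δ) * d * n ^ 2 * r ^ 4) ≤ lam0 / 2) :
    ENNReal.ofReal (1 - δ) ≤
      μ {ω | ∀ i k : Fin n, |∑ j, (m j ω - p) * (X i j * X k j)| ≤ lam0 / (2*(n:ℝ))} := by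
  classical
  have hnR : (0:ℝ) < n := by exact_mod_cast hn
  have hdR : (0:ℝ) < d := by exact_mod_cast hd
  set s := lam0 / (2*(n:ℝ)) with hsdef
  have hs0 : 0 < s := by positivity
  set D := (d:ℝ) * r^4 with hDdef
  have hD0 : 0 < D := by positivity
  set t := s / D with htdef
  have ht0 : 0 ≤ t := by positivity
  set bd := Real.exp (-(s^2/(2*D))) with hbddef
  have hexp_eq : -t*s + t^2 * (d:ℝ) * r^4 / 2 = -(s^2/(2*D)) := by
    rw [htdef, hDdef]
    field_simp
    ring
  set Z : Fin n → Fin n → Ω → ℝ := fun i k ω => ∑ j, (m j ω - p) * (X i j * X k j) with hZdef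
  have hZmeas : ∀ i k, Measurable (Z i k) := by
    intro i k
    apply Finset.measurable_sum
    intro j _
    exact ((hmeas j).sub_const p).mul_const _
  have hc : ∀ i k j, (X i j * X k j)^2 ≤ r^4 := by
    intro i k j
    have h1 := hX i j
    have h2 := hX k j
    simp only [Set.mem_Icc] at h1 h2
    have hab : X i j * X k j ≤ r * r := mul_le_mul h1.2 h2.2 h2.1 (le_trans h1.1 h1.2)
    have hab0 : 0 ≤ X i j * X k j := mul_nonneg h1.1 h2.1
    nlinarith [hab, hab0]
  have hcher : ∀ i k : Fin n,
      (μ {ω | s ≤ Z i k ω}).toReal ≤ bd ∧ (μ {ω | Z i k ω ≤ -s}).toReal ≤ bd := by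
    intro i k
    have := chernoff_sum μ hp0 hp1 (le_of_lt (pow_pos hr 4)) m h01 hmeas hber hindep
      (fun j => X i j * X k j) (fun j => hc i k j) (s := s) ht0
    rw [hexp_eq] at this
    exact this
  -- measurability of the good event
  set G := {ω | ∀ i k : Fin n, |Z i k ω| ≤ s} with hGdef
  have hGm : MeasurableSet G := by
    have : G = ⋂ i, ⋂ k, (fun ω => |Z i k ω|) ⁻¹' Set.Iic s := by
      ext ω; simp [hGdef, Set.mem_iInter, Set.mem_preimage]
    rw [this]
    exact MeasurableSet.iInter fun i => MeasurableSet.iInter fun k =>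
      ((hZmeas i k).abs) measurableSet_Iic
  have hsub : Gᶜ ⊆ ⋃ i, ⋃ k, ({ω | s ≤ Z i k ω} ∪ {ω | Z i k ω ≤ -s}) := by
    intro ω hω
    simp only [hGdef, Set.mem_compl_iff, Set.mem_setOf_eq, not_forall] at hω
    obtain ⟨i, k, hik⟩ := hω
    push_neg at hik
    refine Set.mem_iUnion.mpr ⟨i, Set.mem_iUnion.mpr ⟨k, ?_⟩⟩
    rcases abs_cases (Z i k ω) with ⟨he, _⟩ | ⟨he, _⟩
    · left; rw [Set.mem_setOf_eq, ← he]; exact hik.le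
    · right; rw [Set.mem_setOf_eq]; linarith [hik]
  have hterm : ∀ i k : Fin n, μ ({ω | s ≤ Z i k ω} ∪ {ω | Z i k ω ≤ -s})
      ≤ ENNReal.ofReal bd + ENNReal.ofReal bd := by
    intro i k
    refine (measure_union_le _ _).trans ?_
    apply add_le_add
    · rw [← ENNReal.ofReal_toReal (measure_ne_top μ _)]
      exact ENNReal.ofReal_le_ofReal (hcher i k).1
    · rw [← ENNReal.ofReal_toReal (measure_ne_top μ _)]
      exact ENNReal.ofReal_le_ofReal (hcher i k).2
  have hbad : μ Gᶜ ≤ ENNReal.ofReal δ := by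
    have hnum := numeric_bound hn hd hr hδ0 hδ1 hlam0 hbound
    calc μ Gᶜ ≤ μ (⋃ i, ⋃ k, ({ω | s ≤ Z i k ω} ∪ {ω | Z i k ω ≤ -s})) := measure_mono hsub
    _ ≤ ∑' i : Fin n, μ (⋃ k, ({ω | s ≤ Z i k ω} ∪ {ω | Z i k ω ≤ -s})) := measure_iUnion_le _
    _ ≤ ∑' i : Fin n, ∑' k : Fin n, μ ({ω | s ≤ Z i k ω} ∪ {ω | Z i k ω ≤ -s}) :=
        ENNReal.tsum_le_tsum fun i => measure_iUnion_le _
    _ ≤ ∑' _i : Fin n, ∑' _k : Fin n, (ENNReal.ofReal bd + ENNReal.ofReal bd) :=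
        ENNReal.tsum_le_tsum fun i => ENNReal.tsum_le_tsum fun k => hterm i k
    _ = (n : ENNReal) * ((n : ENNReal) * (ENNReal.ofReal bd + ENNReal.ofReal bd)) := by
        simp only [tsum_fintype, Finset.sum_const, Finset.card_univ, Fintype.card_fin,
          nsmul_eq_mul]
    _ ≤ ENNReal.ofReal δ := by
        rw [← ENNReal.ofReal_add (by positivity) (by positivity)]
        rw [show ((n:ENNReal)) = ENNReal.ofReal (n:ℝ) by simp]
        rw [← ENNReal.ofReal_mul (by positivity), ← ENNReal.ofReal_mul (by positivity)]
        apply ENNReal.ofReal_le_ofReal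
        calc (n:ℝ) * ((n:ℝ) * (bd + bd)) = 2 * (n:ℝ)^2 * bd := by ring
        _ ≤ δ := hnum
  have h1 : μ ((Gᶜ)ᶜ) = 1 - μ Gᶜ := prob_compl_eq_one_sub hGm.compl
  rw [compl_compl] at h1
  have hfin : ENNReal.ofReal (1 - δ) ≤ μ G := by
    rw [h1]
    have e : ENNReal.ofReal (1 - δ) = 1 - ENNReal.ofReal δ := by
      rw [ENNReal.ofReal_sub _ hδ0.le]; simp
    rw [e]
    exact tsub_le_tsub_left hbad 1
  exact hfin


end AuxiliaryLemmas

/-- under the stated smallness conditions, with probability ≥ 1 − δ the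
largest eigenvalue of H = MXᵀXM is at most λ₀, hence GD with any 0 < η < 2n/λ₀ converges
from every initialization. -/
theorem masked_gd_stable {n d : ℕ} {Ω : Type} [MeasurableSpace Ω]
    (μ : Measure Ω) [IsProbabilityMeasure μ]
    (p r δ lam0 : ℝ) (hp0 : 0 ≤ p) (hp1 : p ≤ 1) (hδ0 : 0 < δ) (hδ1 : δ < 1)
    (hlam0 : 0 < lam0)
    (X : Matrix (Fin n) (Fin d) ℝ) (hX : ∀ i j, X i j ∈ Set.Icc (0 : ℝ) r)
    (y : Fin n → ℝ)
    (m : Fin d → Ω → ℝ) (h01 : ∀ i ω, m i ω = 0 ∨ m i ω = 1)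
    (hmeas : ∀ i, Measurable (m i))
    (hber : ∀ i, μ {ω | m i ω = 1} = ENNReal.ofReal p)
    (hindep : ProbabilityTheory.iIndepFun m μ)
    (hplam : p ≤ lam0 / (2 * (⨆ i, (hermXtX X).eigenvalues i)))
    (hbound : 2 * Real.sqrt (2 * d * n ^ 3 * r ^ 4) +
      Real.sqrt (2 * Real.log (1 / δ) * d * n ^ 2 * r ^ 4) ≤ lam0 / 2) :
    ENNReal.ofReal (1 - δ) ≤ μ {ω |
      (⨆ i, (diag_herm X (fun j => m j ω)).eigenvalues i) ≤ lam0 ∧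
      ∀ η : ℝ, 0 < η → η < 2 * n / lam0 → ∀ w0 : Fin d → ℝ,
        ∃ l : Fin d → ℝ,
          Tendsto (gd X (Matrix.diagonal (fun j => m j ω)) y η w0) atTop (nhds l)} := by
  classical
  set s := lam0 / (2*(n:ℝ)) with hsdef
  set G := {ω | ∀ i k : Fin n, |∑ j, (m j ω - p) * (X i j * X k j)| ≤ s} with hGdef
  have hs0 : 0 ≤ s := by positivity
  have hprob : ENNReal.ofReal (1 - δ) ≤ μ G := by
    have hle1 : ENNReal.ofReal (1 - δ) ≤ 1 := ENNReal.ofReal_le_one.mpr (by linarith)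
    rcases Nat.eq_zero_or_pos n with hn | hn
    · subst hn
      have hGu : G = Set.univ := by
        ext ω
        simp only [hGdef, Set.mem_setOf_eq, Set.mem_univ, iff_true]
        intro i; exact i.elim0
      rw [hGu, measure_univ]; exact hle1
    rcases Nat.eq_zero_or_pos d with hd | hd
    · subst hd
      have hGu : G = Set.univ := by
        ext ω
        simp only [hGdef, Set.mem_setOf_eq, Set.mem_univ, iff_true]
        intro i k
        simp [hs0]
      rw [hGu, measure_univ]; exact hle1
    rcases le_or_gt r 0 with hr | hr
    · have hX0 : ∀ i j, X i j = 0 := by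
        intro i j
        have := hX i j
        simp only [Set.mem_Icc] at this
        linarith [this.1, this.2]
      have hGu : G = Set.univ := by
        ext ω
        simp only [hGdef, Set.mem_setOf_eq, Set.mem_univ, iff_true]
        intro i k
        simp [hX0, hs0]
      rw [hGu, measure_univ]; exact hle1
    · exact prob_G μ hp0 hp1 hδ0 hδ1 hlam0 hn hd hr X hX m
        (fun j ω => h01 j ω) hmeas hber hindep hbound
  refine le_trans hprob (measure_mono ?_)
  intro ω hω
  have hZ : ∀ i k : Fin n, |∑ j, (m j ω - p) * (X i j * X k j)| ≤ s := hω
  have hpl : p * (⨆ i, (hermXtX X).eigenvalues i) ≤ lam0 / 2 := by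
    have hL0 : 0 ≤ ⨆ i, (hermXtX X).eigenvalues i := lamd_nonneg X
    rcases eq_or_lt_of_le hL0 with h | h
    · rw [← h] at hplam ⊢
      simp only [mul_zero] at hplam ⊢
      positivity
    · rw [le_div_iff₀ (by positivity)] at hplam
      nlinarith
  have hsn : s * n ≤ lam0 / 2 := by
    rcases Nat.eq_zero_or_pos n with hn | hn
    · subst hn
      simp only [Nat.cast_zero, mul_zero]
      positivity
    · have hnR : (0:ℝ) < n := by exact_mod_cast hn
      have : s * n = lam0 / 2 := by
        rw [hsdef]
        field_simp
      rw [this]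
  have heig : ∀ i, (diag_herm' X (fun j => m j ω)).eigenvalues i ≤ lam0 :=
    eigH_le_lam0 X (fun j => m j ω) (fun j => h01 j ω) hp0 hs0
      (fun i k => hZ i k) hpl hsn hlam0.le
  constructor
  · rcases isEmpty_or_nonempty (Fin d) with he | he
    · rw [Real.iSup_of_isEmpty]
      exact hlam0.le
    · exact ciSup_le heig
  · intro η hη0 hη w0
    exact gd_converges X (fun j => m j ω) y hlam0 heig hη0 hη w0
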